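/- Soundness of rule R1: if φ → ψ is valid (true at every state of every WTS), then (L_r ψ ∧ L₀ φ) → L_r φ is valid, for any r ∈ ℚ≥0. -/

import Mathlib

open Classical

/-- A weighted transition system with states `S` and atomic propositions `AP`. -/
structure WTS (S AP : Type) where
  tr : S → NNReal → S → Prop
  label : S → Set AP

/-- The image set θ(s)(T) = {r | ∃ t ∈ T, s —r→ t}. -/
def theta {S AP : Type} (M : WTS S AP) (s : S) (T : Set S) : Set NNReal :=
  {r | ∃ t ∈ T, M.tr s r t}

/-- θ⁻(s)(T): the infimum of the image set, or −∞ if it is empty. -/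
noncomputable def thetaMin {S AP : Type} (M : WTS S AP) (s : S) (T : Set S) : EReal :=
  if theta M s T = ∅ then ⊥
  else sInf ((fun r : NNReal => ((r : ℝ) : EReal)) '' theta M s T)

/-- θ⁺(s)(T): the supremum of the image set, or ∞ if it is empty. -/
noncomputable def thetaMax {S AP : Type} (M : WTS S AP) (s : S) (T : Set S) : EReal :=
  if theta M s T = ∅ then ⊤
  else sSup ((fun r : NNReal => ((r : ℝ) : EReal)) '' theta M s T)

/-- A generalized weighted bisimulation relation. -/
def IsGWBisim {S AP : Type} (M : WTS S AP) (R : S → S → Prop) : Prop :=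
  Equivalence R ∧
    ∀ s t : S, R s t →
      M.label s = M.label t ∧
      ∀ T : Set S, (∃ u : S, T = {v | R u v}) →
        thetaMin M s T = thetaMin M t T ∧ thetaMax M s T = thetaMax M t T

/-- Generalized weighted bisimilarity ∼. -/
def gwBisimilar {S AP : Type} (M : WTS S AP) (s t : S) : Prop :=
  ∃ R : S → S → Prop, IsGWBisim M R ∧ R s t

/-- A (classical) weighted bisimulation relation. -/
def IsWBisim {S AP : Type} (M : WTS S AP) (R : S → S → Prop) : Prop :=
  Equivalence R ∧
    ∀ s t : S, R s t →
      M.label s = M.label t ∧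
      (∀ (r : NNReal) (s' : S), M.tr s r s' → ∃ t' : S, M.tr t r t' ∧ R s' t') ∧
      (∀ (r : NNReal) (t' : S), M.tr t r t' → ∃ s' : S, M.tr s r s' ∧ R s' t')

/-- Weighted bisimilarity ∼_W. -/
def wBisimilar {S AP : Type} (M : WTS S AP) (s t : S) : Prop :=
  ∃ R : S → S → Prop, IsWBisim M R ∧ R s t

/-- Formulae of the logic L. -/
inductive Fml (AP : Type) where
  | atom : AP → Fml AP
  | neg : Fml AP → Fml AP
  | and : Fml AP → Fml AP → Fml AP
  | L : ℚ≥0 → Fml AP → Fml AP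
  | M : ℚ≥0 → Fml AP → Fml AP

/-- Disjunction, as a derived operator. -/
def Fml.or {AP : Type} (φ ψ : Fml AP) : Fml AP := .neg (.and (.neg φ) (.neg ψ))

/-- The satisfaction relation M, s ⊨ φ. -/
noncomputable def Sat {S AP : Type} (M : WTS S AP) : Fml AP → S → Prop
  | .atom p, s => p ∈ M.label s
  | .neg φ, s => ¬ Sat M φ s
  | .and φ ψ, s => Sat M φ s ∧ Sat M ψ s
  | .L r φ, s => ((((r : ℚ) : ℝ)) : EReal) ≤ thetaMin M s {u | Sat M φ u}
  | .M r φ, s => thetaMax M s {u | Sat M φ u} ≤ ((((r : ℚ) : ℝ)) : EReal)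

theorem soundness_R1 {AP : Type} (φ ψ : Fml AP) (r : ℚ≥0)
    (hvalid : ∀ (S : Type) (M : WTS S AP) (s : S), Sat M φ s → Sat M ψ s) :
    ∀ (S : Type) (M : WTS S AP) (s : S),
      Sat M (.L r ψ) s ∧ Sat M (.L 0 φ) s → Sat M (.L r φ) s := by
  intro S M s ⟨hψ, hφ0⟩
  simp only [Sat] at *
  have hsub : theta M s {u | Sat M φ u} ⊆ theta M s {u | Sat M ψ u} := by
    rintro x ⟨t, ht, htr⟩
    exact ⟨t, hvalid S M t ht, htr⟩
  have hne : theta M s {u | Sat M φ u} ≠ ∅ := by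
    intro h
    rw [thetaMin, if_pos h] at hφ0
    exact absurd hφ0 (by simp)
  have hneψ : theta M s {u | Sat M ψ u} ≠ ∅ := by
    intro h
    exact hne (Set.subset_empty_iff.mp (h ▸ hsub))
  rw [thetaMin, if_neg hne]
  rw [thetaMin, if_neg hneψ] at hψ
  exact le_trans hψ (sInf_le_sInf (Set.image_mono hsub))
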